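/- Let r > 0 be real and α, β, γ ∈ ℂ. If e^{−rα²} = 2, e^{−rβ²} = 2, and e^{−rγ²} = 2, then α + β + γ ≠ 0. -/
import Mathlib


/-- No three spectral roots of the p-adic particle (p = 2) sum to zero. -/
theorem stmt19 (r : ℝ) (hr : 0 < r) (α β γ : ℂ)
    (hα : Complex.exp (-(r : ℂ) * α ^ 2) = 2)
    (hβ : Complex.exp (-(r : ℂ) * β ^ 2) = 2)
    (hγ : Complex.exp (-(r : ℂ) * γ ^ 2) = 2) :
    α + β + γ ≠ 0 := by
  intro h
  set c : ℝ := -Real.log 2 / r with hcdef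
  have hc : c < 0 := by
    have : 0 < Real.log 2 := Real.log_pos (by norm_num)
    rw [hcdef]
    exact div_neg_of_neg_of_pos (by linarith) hr
  have key : ∀ δ : ℂ, Complex.exp (-(r : ℂ) * δ ^ 2) = 2 →
      δ.re ^ 2 - δ.im ^ 2 = c := by
    intro δ hδ
    have h1 : Real.exp ((-(r : ℂ) * δ ^ 2).re) = 2 := by
      rw [← Complex.norm_exp, hδ]
      norm_num
    have h2 : (-(r : ℂ) * δ ^ 2).re = Real.log 2 := by
      rw [← Real.exp_log (by norm_num : (0:ℝ) < 2)] at h1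
      exact Real.exp_injective h1
    have h3 : (-(r : ℂ) * δ ^ 2).re = -r * (δ.re ^ 2 - δ.im ^ 2) := by
      simp [Complex.mul_re, Complex.mul_im, pow_two]
      try ring
    rw [h3] at h2
    rw [hcdef]
    field_simp
    linarith
  have hp : α.re ^ 2 - α.im ^ 2 = c := key α hα
  have hs : β.re ^ 2 - β.im ^ 2 = c := key β hβ
  have hγ' : γ = -(α + β) := by linear_combination h
  have hg : (α.re + β.re) ^ 2 - (α.im + β.im) ^ 2 = c := by
    have := key γ hγ
    rw [hγ'] at this
    simp only [Complex.neg_re, Complex.add_re, Complex.neg_im, Complex.add_im] at this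
    linear_combination this
  set P := α.re; set Q := α.im; set S := β.re; set T := β.im
  have hc0 : c ≠ 0 := ne_of_lt hc
  have hX : P * S - Q * T = -c / 2 := by
    linear_combination hg / 2 - hp / 2 - hs / 2
  have hY : c * (P * T + Q * S) = c * (-2 * (P * Q + S * T)) := by
    linear_combination (-2 * S * T) * hp + (-2 * P * Q) * hs +
      (2 * (P * T + Q * S)) * hX
  have hY2 : P * T + Q * S = -2 * (P * Q + S * T) := mul_left_cancel₀ hc0 hY
  have hV : (P * T + Q * S) ^ 2 = 4 * (P * Q) * (S * T) - 3 / 4 * c ^ 2 := by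
    linear_combination (T ^ 2 - S ^ 2) * hp + (-c) * hs +
      (P * S - Q * T - c / 2) * hX
  have h7 : (P * T + Q * S) ^ 2 = 4 * (P * Q + S * T) ^ 2 := by
    rw [hY2]; ring
  have hc2 : 0 < c ^ 2 := by positivity
  nlinarith [sq_nonneg (2 * (P * Q) + S * T), sq_nonneg (S * T), hV, h7, hc2]
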